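/- Let f : ω → ω be a bijection and let 0 < p < q ≤ 1. Then there exists a set A ⊆ ω such that Σ_{n∈A} 1/(n+1)^p = ∞ and Σ_{n∈f[A]} 1/(n+1)^q < ∞. -/
import Mathlib


open Filter Topology

noncomputable section

open Finset

lemma ev_ge (c r : ℝ) (hr : 0 < r) : ∀ᶠ M : ℕ in atTop, c ≤ ((M:ℝ)+1) ^ r := by
  have h : Tendsto (fun M : ℕ => ((M:ℝ)+1) ^ r) atTop atTop :=
    (tendsto_rpow_atTop hr).comp ((tendsto_atTop_add_const_right atTop 1 tendsto_natCast_atTop_atTop))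
  exact h.eventually_ge_atTop c

lemma block_lemma (f : ℕ → ℕ) (hf : Function.Injective f) (p q : ℝ)
    (hp : 0 < p) (hpq : p < q) (hq : q ≤ 1) (k L : ℕ) :
    ∃ F : Finset ℕ, (∀ a ∈ F, L ≤ a) ∧ (∀ a ∈ F, L ≤ f a) ∧ (∀ a ∈ F, k ≤ f a) ∧
      1 ≤ ∑ a ∈ F, 1 / ((a : ℝ) + 1) ^ p ∧
      ∑ a ∈ F, 1 / ((f a : ℝ) + 1) ^ q ≤ (1/2 : ℝ) ^ k := by
  set ε : ℝ := (1/2 : ℝ) ^ k with hε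
  have hε0 : 0 < ε := by positivity
  have hε1 : ε ≤ 1 := by
    rw [hε]; exact pow_le_one₀ (by norm_num) (by norm_num)
  have hq0 : 0 < q := hp.trans hpq
  -- choose M
  obtain ⟨M, hM1, hM2, hM3⟩ :
      ∃ M : ℕ, (L ≤ M ∧ k ≤ M) ∧ 2 / ε ≤ ((M:ℝ)+1) ^ q ∧ 8 / ε ≤ ((M:ℝ)+1) ^ (q - p) := by
    have h1 : ∀ᶠ M : ℕ in atTop, L ≤ M ∧ k ≤ M :=
      (eventually_ge_atTop L).and (eventually_ge_atTop k)
    have h2 := ev_ge (2/ε) q hq0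
    have h3 := ev_ge (8/ε) (q-p) (by linarith)
    obtain ⟨M, hM⟩ := ((h1.and (h2.and h3))).exists
    exact ⟨M, hM.1, hM.2.1, hM.2.2⟩
  set X : ℝ := ((M:ℝ)+1) ^ q with hX
  set Y : ℝ := ((M:ℝ)+1) ^ p with hY
  have hXpos : 0 < X := by rw [hX]; positivity
  have hYpos : 0 < Y := by rw [hY]; positivity
  have hM1' : (1:ℝ) ≤ (M:ℝ)+1 := by
    have := Nat.cast_nonneg (α:=ℝ) M; linarith
  have h2' : 2 ≤ ε * X := by
    rw [div_le_iff₀ hε0] at hM2; linarith [hM2]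
  have h8' : 8 * Y ≤ ε * X := by
    have hXY : ((M:ℝ)+1)^(q-p) = X / Y := Real.rpow_sub (by positivity) q p
    rw [hXY, div_le_div_iff₀ hε0 hYpos] at hM3
    linarith
  set N : ℕ := ⌊ε * X⌋₊ with hN
  have hNle : (N:ℝ) ≤ ε * X := Nat.floor_le (by positivity)
  have hNge : ε * X / 2 ≤ (N:ℝ) := by
    have := Nat.sub_one_lt_floor (ε * X)
    rw [← hN] at this
    linarith
  have hNM : (N:ℝ) ≤ (M:ℝ)+1 := by
    have h1 : X ≤ ((M:ℝ)+1) ^ (1:ℝ) :=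
      Real.rpow_le_rpow_of_exponent_le hM1' hq
    rw [Real.rpow_one] at h1
    nlinarith
  have hNMnat : N ≤ M + 1 := by exact_mod_cast hNM
  -- the bad set
  set B : Finset ℕ := (Finset.range M).preimage f hf.injOn with hB
  have hBcard : B.card ≤ M := by
    have h := Finset.card_le_card_of_injOn (s := B) (t := Finset.range M) f
      (fun a ha => Finset.mem_preimage.mp ha) hf.injOn
    simpa using h
  have hScard : N ≤ ((Finset.Ico L (L+M+N)) \ B).card := by
    have h := Finset.le_card_sdiff B (Finset.Ico L (L+M+N))
    rw [Nat.card_Ico] at h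
    omega
  obtain ⟨F, hFsub, hFcard⟩ := Finset.exists_subset_card_eq hScard
  have hmem : ∀ a ∈ F, L ≤ a ∧ a < L+M+N ∧ M ≤ f a := by
    intro a ha
    have h := hFsub ha
    rw [Finset.mem_sdiff, Finset.mem_Ico] at h
    refine ⟨h.1.1, h.1.2, ?_⟩
    by_contra hc
    push_neg at hc
    exact h.2 (Finset.mem_preimage.mpr (Finset.mem_range.mpr hc))
  refine ⟨F, fun a ha => (hmem a ha).1, fun a ha => le_trans hM1.1 (hmem a ha).2.2,
    fun a ha => le_trans hM1.2 (hmem a ha).2.2, ?_, ?_⟩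
  · -- p-sum ≥ 1
    have hterm : ∀ a ∈ F, 1 / (3 * Y) ≤ 1 / ((a : ℝ) + 1) ^ p := by
      intro a ha
      have ha' : (a:ℝ) + 1 ≤ 3 * ((M:ℝ)+1) := by
        have h1 : a + 1 ≤ L + M + N := (hmem a ha).2.1
        have h1' : ((a+1:ℕ):ℝ) ≤ ((L+M+N:ℕ):ℝ) := Nat.cast_le.mpr h1
        push_cast at h1'
        have hL : (L:ℝ) ≤ (M:ℝ) := Nat.cast_le.mpr hM1.1
        linarith [hNM]
      have hpow : ((a:ℝ)+1) ^ p ≤ 3 * Y := by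
        have h3 : ((a:ℝ)+1) ^ p ≤ (3 * ((M:ℝ)+1)) ^ p :=
          Real.rpow_le_rpow (by positivity) ha' hp.le
        have h4 : (3 * ((M:ℝ)+1)) ^ p = (3:ℝ)^p * Y :=
          Real.mul_rpow (by norm_num) (by positivity)
        have h5 : (3:ℝ)^p ≤ 3 := by
          calc (3:ℝ)^p ≤ (3:ℝ)^(1:ℝ) :=
                Real.rpow_le_rpow_of_exponent_le (by norm_num) (hpq.le.trans hq)
            _ = 3 := Real.rpow_one 3
        calc ((a:ℝ)+1) ^ p ≤ (3:ℝ)^p * Y := by rw [← h4]; exact h3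
          _ ≤ 3 * Y := by nlinarith
      exact one_div_le_one_div_of_le (by positivity) hpow
    have hsum : (N:ℝ) * (1 / (3*Y)) ≤ ∑ a ∈ F, 1 / ((a : ℝ) + 1) ^ p := by
      calc (N:ℝ) * (1 / (3*Y)) = ∑ _a ∈ F, 1/(3*Y) := by
            rw [Finset.sum_const, hFcard, nsmul_eq_mul]
        _ ≤ _ := Finset.sum_le_sum hterm
    have hfin : (1:ℝ) ≤ (N:ℝ) * (1 / (3*Y)) := by
      rw [mul_one_div, le_div_iff₀ (by positivity)]
      linarith
    linarith
  · -- q-sum ≤ ε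
    have hterm : ∀ a ∈ F, 1 / ((f a : ℝ) + 1) ^ q ≤ 1 / X := by
      intro a ha
      have h1 : ((M:ℝ)+1) ≤ (f a : ℝ) + 1 := by
        have := (hmem a ha).2.2
        have : (M:ℝ) ≤ (f a : ℝ) := by exact_mod_cast this
        linarith
      have h2 : X ≤ ((f a : ℝ) + 1) ^ q :=
        Real.rpow_le_rpow (by positivity) h1 hq0.le
      exact one_div_le_one_div_of_le hXpos h2
    calc ∑ a ∈ F, 1 / ((f a : ℝ) + 1) ^ q ≤ ∑ _a ∈ F, 1 / X :=
          Finset.sum_le_sum hterm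
      _ = (N:ℝ) * (1/X) := by rw [Finset.sum_const, hFcard, nsmul_eq_mul]
      _ ≤ ε := by
          rw [mul_one_div, div_le_iff₀ hXpos]
          linarith

/-- For every bijection `f : ω → ω` and `0 < p < q ≤ 1` there is a set `A ⊆ ω` with
`Σ_{n∈A} 1/(n+1)^p = ∞` (the series over `A` diverges) and
`Σ_{n∈f[A]} 1/(n+1)^q < ∞` (the series over `f[A]` converges). -/
theorem stmt15 (f : ℕ → ℕ) (hf : Function.Bijective f) (p q : ℝ)
    (hp : 0 < p) (hpq : p < q) (hq : q ≤ 1) :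
    ∃ A : Set ℕ,
      ¬ Summable (A.indicator fun n : ℕ => 1 / ((n : ℝ) + 1) ^ p) ∧
      Summable ((f '' A).indicator fun n : ℕ => 1 / ((n : ℝ) + 1) ^ q) := by
  classical
  have hfi := hf.injective
  choose F hF1 hF2 hF3 hF4 hF5 using block_lemma f hfi p q hp hpq hq
  let L : ℕ → ℕ := fun n =>
    Nat.rec 0 (fun k Lk => max Lk (((F k Lk) ∪ (F k Lk).image f).sup id) + 1) n
  let G : ℕ → Finset ℕ := fun k => F k (L k)
  have hLsucc : ∀ k, L (k+1) = max (L k) (((G k) ∪ (G k).image f).sup id) + 1 :=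
    fun k => rfl
  have hGa : ∀ k, ∀ a ∈ G k, a < L (k+1) := by
    intro k a ha
    have h1 : a ≤ ((G k) ∪ (G k).image f).sup id :=
      Finset.le_sup (f := id) (Finset.mem_union_left _ ha)
    rw [hLsucc k]; omega
  have hGfa : ∀ k, ∀ a ∈ G k, f a < L (k+1) := by
    intro k a ha
    have h1 : f a ≤ ((G k) ∪ (G k).image f).sup id :=
      Finset.le_sup (f := id) (Finset.mem_union_right _ (Finset.mem_image_of_mem f ha))
    rw [hLsucc k]; omega
  have hLmono : Monotone L := by
    apply monotone_nat_of_le_succ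
    intro k
    rw [hLsucc k]; omega
  have hGdisj : ∀ j k : ℕ, j ≠ k → Disjoint (G j) (G k) := by
    have key : ∀ j k : ℕ, j < k → Disjoint (G j) (G k) := by
      intro j k hjk
      rw [Finset.disjoint_left]
      intro a haj hak
      have h1 : a < L (j+1) := hGa j a haj
      have h2 : L k ≤ a := hF1 k (L k) a hak
      have h3 : L (j+1) ≤ L k := hLmono hjk
      omega
    intro j k hjk
    rcases lt_or_gt_of_ne hjk with h | h
    · exact key j k h
    · exact (key k j h).symm
  have hGIdisj : ∀ j k : ℕ, j ≠ k → Disjoint ((G j).image f) ((G k).image f) := by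
    have key : ∀ j k : ℕ, j < k → Disjoint ((G j).image f) ((G k).image f) := by
      intro j k hjk
      rw [Finset.disjoint_left]
      intro i hij hik
      obtain ⟨a, haj, rfl⟩ := Finset.mem_image.mp hij
      obtain ⟨b, hbk, hba⟩ := Finset.mem_image.mp hik
      have h1 : f a < L (j+1) := hGfa j a haj
      have h2 : L k ≤ f b := hF2 k (L k) b hbk
      have h3 : L (j+1) ≤ L k := hLmono hjk
      omega
    intro j k hjk
    rcases lt_or_gt_of_ne hjk with h | h
    · exact key j k h
    · exact (key k j h).symm
  refine ⟨⋃ k, ↑(G k), ?_, ?_⟩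
  · -- not summable
    intro hs
    set gA := (⋃ k, (↑(G k) : Set ℕ)).indicator fun n : ℕ => 1 / ((n : ℝ) + 1) ^ p with hgA
    have hnonneg : ∀ n : ℕ, 0 ≤ gA n := fun n =>
      Set.indicator_nonneg (fun m _ => by positivity) n
    obtain ⟨K, hK⟩ := exists_nat_ge (∑' n, gA n)
    have hbound := Summable.sum_le_tsum ((Finset.range (K+1)).biUnion G)
      (fun n _ => hnonneg n) hs
    have hdisj : (↑(Finset.range (K+1)) : Set ℕ).PairwiseDisjoint G :=
      fun j _ k _ hjk => hGdisj j k hjk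
    rw [Finset.sum_biUnion hdisj] at hbound
    have hinner : ∀ k ∈ Finset.range (K+1), (1:ℝ) ≤ ∑ a ∈ G k, gA a := by
      intro k _
      have : ∑ a ∈ G k, gA a = ∑ a ∈ G k, 1 / ((a : ℝ) + 1) ^ p := by
        apply Finset.sum_congr rfl
        intro a ha
        exact Set.indicator_of_mem (Set.mem_iUnion.mpr ⟨k, ha⟩) _
      rw [this]
      exact hF4 k (L k)
    have hlow : (K+1 : ℝ) ≤ ∑ k ∈ Finset.range (K+1), ∑ a ∈ G k, gA a := by
      calc (K+1 : ℝ) = ∑ _k ∈ Finset.range (K+1), (1:ℝ) := by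
            rw [Finset.sum_const, Finset.card_range, nsmul_eq_mul, mul_one]; push_cast; ring
        _ ≤ _ := Finset.sum_le_sum hinner
    linarith
  · -- summable
    set gB := (f '' ⋃ k, (↑(G k) : Set ℕ)).indicator fun n : ℕ => 1 / ((n : ℝ) + 1) ^ q with hgB
    apply summable_of_sum_range_le (c := 2)
      (fun n => Set.indicator_nonneg (fun m _ => by positivity) n)
    intro n
    set U := (Finset.range n).biUnion (fun k => (G k).image f) with hU
    have hstep1 : ∑ i ∈ Finset.range n, gB i =
        ∑ i ∈ (Finset.range n).filter (· ∈ f '' ⋃ k, (↑(G k) : Set ℕ)), 1 / ((i : ℝ) + 1) ^ q := by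
      rw [Finset.sum_filter]
      apply Finset.sum_congr rfl
      intro i _
      simp [hgB, Set.indicator_apply]
    have hsub : (Finset.range n).filter (· ∈ f '' ⋃ k, (↑(G k) : Set ℕ)) ⊆ U := by
      intro i hi
      rw [Finset.mem_filter] at hi
      have hin := hi.1
      obtain ⟨a, ha, rfl⟩ := hi.2
      obtain ⟨k, hk⟩ := Set.mem_iUnion.mp ha
      have hkfa : k ≤ f a := hF3 k (L k) a hk
      rw [Finset.mem_range] at hin
      exact Finset.mem_biUnion.mpr ⟨k, Finset.mem_range.mpr (by omega),
        Finset.mem_image_of_mem f hk⟩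
    have hstep2 : ∑ i ∈ (Finset.range n).filter (· ∈ f '' ⋃ k, (↑(G k) : Set ℕ)),
        1 / ((i : ℝ) + 1) ^ q ≤ ∑ i ∈ U, 1 / ((i : ℝ) + 1) ^ q :=
      Finset.sum_le_sum_of_subset_of_nonneg hsub (fun i _ _ => by positivity)
    have hdisj : (↑(Finset.range n) : Set ℕ).PairwiseDisjoint (fun k => (G k).image f) :=
      fun j _ k _ hjk => hGIdisj j k hjk
    have hstep3 : ∑ i ∈ U, 1 / ((i : ℝ) + 1) ^ q =
        ∑ k ∈ Finset.range n, ∑ i ∈ (G k).image f, 1 / ((i : ℝ) + 1) ^ q :=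
      Finset.sum_biUnion hdisj
    have hstep4 : ∀ k ∈ Finset.range n,
        ∑ i ∈ (G k).image f, 1 / ((i : ℝ) + 1) ^ q ≤ (1/2 : ℝ) ^ k := by
      intro k _
      rw [Finset.sum_image (fun a _ b _ h => hfi h)]
      exact hF5 k (L k)
    calc ∑ i ∈ Finset.range n, gB i ≤ ∑ i ∈ U, 1 / ((i : ℝ) + 1) ^ q := by
          rw [hstep1]; exact hstep2
      _ = _ := hstep3
      _ ≤ ∑ k ∈ Finset.range n, (1/2 : ℝ) ^ k := Finset.sum_le_sum hstep4
      _ ≤ 2 := sum_geometric_two_le n
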